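/- Weight change under single vertex move: Let G be a finite simple graph with functions a, b : V(G) → ℤ≥0 and h : V(G) → {0,1} such that d_G(u) = a(u) + b(u) + h(u) for all u. Let (X_1, X_2) be a partition of V(G) and define the weight ω(X_1, X_2) = e(X_1) + e(X_2) + Σ_{u∈X_1} b(u) + Σ_{v∈X_2} a(v), where e(X) is the number of edges with both ends in X. If u ∈ X_1 satisfies d_{X_1}(u) ≤ a(u), then ω(X_1 \ {u}, X_2 ∪ {u}) − ω(X_1, X_2) ≥ h(u); and if v ∈ X_2 satisfies d_{X_2}(v) ≤ b(v) + h(v) − 1, then ω(X_1 ∪ {v}, X_2 \ {v}) − ω(X_1, X_2) ≥ 2 − h(v). -/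

import Mathlib

open scoped Classical

/-- Number of edges of `G` with both endpoints in `X`. -/
noncomputable def edgesIn {V : Type*} [Fintype V] [DecidableEq V]
    (G : SimpleGraph V) [DecidableRel G.Adj] (X : Finset V) : ℕ :=
  (G.edgeFinset.filter (fun e => ∀ v ∈ e, v ∈ X)).card

/-- The weight `ω(X₁, X₂) = e(X₁) + e(X₂) + Σ_{u ∈ X₁} b(u) + Σ_{v ∈ X₂} a(v)`. -/
noncomputable def wt {V : Type*} [Fintype V] [DecidableEq V]
    (G : SimpleGraph V) [DecidableRel G.Adj] (a b : V → ℕ) (X1 X2 : Finset V) : ℕ :=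
  edgesIn G X1 + edgesIn G X2 + ∑ u ∈ X1, b u + ∑ v ∈ X2, a v


lemma edgesIn_insert {V : Type*} [Fintype V] [DecidableEq V]
    (G : SimpleGraph V) [DecidableRel G.Adj] (X : Finset V) (u : V) (hu : u ∉ X) :
    edgesIn G (insert u X) = edgesIn G X + (X.filter (G.Adj u)).card := by
  classical
  unfold edgesIn
  have hsplit : G.edgeFinset.filter (fun e => ∀ v ∈ e, v ∈ insert u X)
      = G.edgeFinset.filter (fun e => ∀ v ∈ e, v ∈ X)
        ∪ G.edgeFinset.filter (fun e => u ∈ e ∧ ∀ v ∈ e, v ∈ insert u X) := by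
    ext e
    induction e with
    | h x y =>
      simp only [Finset.mem_filter, Finset.mem_union, Sym2.mem_iff, Finset.mem_insert]
      constructor
      · rintro ⟨he, hall⟩
        by_cases hx : u = x ∨ u = y
        · exact Or.inr ⟨he, hx, hall⟩
        · push_neg at hx
          refine Or.inl ⟨he, ?_⟩
          intro v hv
          rcases hall v hv with rfl | h1
          · rcases hv with rfl | rfl
            · exact absurd rfl hx.1
            · exact absurd rfl hx.2
          · exact h1
      · rintro (⟨he, hall⟩ | ⟨he, _, hall⟩)
        · exact ⟨he, fun v hv => Or.inr (hall v hv)⟩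
        · exact ⟨he, hall⟩
  have hdisj : Disjoint (G.edgeFinset.filter (fun e => ∀ v ∈ e, v ∈ X))
      (G.edgeFinset.filter (fun e => u ∈ e ∧ ∀ v ∈ e, v ∈ insert u X)) := by
    rw [Finset.disjoint_left]
    rintro e he1 he2
    rw [Finset.mem_filter] at he1 he2
    exact hu (he1.2 u he2.2.1)
  rw [hsplit, Finset.card_union_of_disjoint hdisj]
  congr 1
  refine (Finset.card_bij (fun v _ => s(u, v)) ?_ ?_ ?_).symm
  · intro v hv
    rw [Finset.mem_filter] at hv ⊢
    refine ⟨SimpleGraph.mem_edgeFinset.2 hv.2, Sym2.mem_mk_left u v, ?_⟩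
    intro w hw
    rcases Sym2.mem_iff.1 hw with rfl | rfl
    · exact Finset.mem_insert_self _ _
    · exact Finset.mem_insert_of_mem hv.1
  · intro v1 h1 v2 h2 heq
    have := Sym2.eq_iff.1 heq
    rcases this with ⟨_, rfl⟩ | ⟨rfl, rfl⟩ <;> rfl
  · rintro e he
    rw [Finset.mem_filter] at he
    obtain ⟨he1, hue, hall⟩ := he
    obtain ⟨w, rfl⟩ := Sym2.mem_iff_exists.1 hue
    have hadj : G.Adj u w := SimpleGraph.mem_edgeFinset.1 he1
    have hwX : w ∈ X := by
      rcases Finset.mem_insert.1 (hall w (Sym2.mem_mk_right u w)) with rfl | h1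
      · exact absurd hadj (G.loopless.irrefl w)
      · exact h1
    exact ⟨w, Finset.mem_filter.2 ⟨hwX, hadj⟩, rfl⟩

lemma filter_erase_adj {V : Type*} [Fintype V] [DecidableEq V]
    (G : SimpleGraph V) [DecidableRel G.Adj] (X : Finset V) (u : V) :
    (X.erase u).filter (G.Adj u) = X.filter (G.Adj u) := by
  ext v
  simp only [Finset.mem_filter, Finset.mem_erase]
  constructor
  · rintro ⟨⟨_, h1⟩, h2⟩; exact ⟨h1, h2⟩
  · rintro ⟨h1, h2⟩
    exact ⟨⟨fun e => G.loopless.irrefl u (e ▸ h2), h1⟩, h2⟩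

lemma edgesIn_erase {V : Type*} [Fintype V] [DecidableEq V]
    (G : SimpleGraph V) [DecidableRel G.Adj] (X : Finset V) (u : V) (hu : u ∈ X) :
    edgesIn G X = edgesIn G (X.erase u) + (X.filter (G.Adj u)).card := by
  have h1 := edgesIn_insert G (X.erase u) u (Finset.notMem_erase u X)
  rw [Finset.insert_erase hu, filter_erase_adj] at h1
  exact h1

lemma degree_split {V : Type*} [Fintype V] [DecidableEq V]
    (G : SimpleGraph V) [DecidableRel G.Adj]
    (X1 X2 : Finset V) (hdisj : Disjoint X1 X2) (hun : X1 ∪ X2 = Finset.univ) (u : V) :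
    (X1.filter (G.Adj u)).card + (X2.filter (G.Adj u)).card = G.degree u := by
  rw [← Finset.card_union_of_disjoint
      (Finset.disjoint_filter_filter hdisj), ← Finset.filter_union, hun]
  simp [SimpleGraph.degree, SimpleGraph.neighborFinset_eq_filter]

/-- Weight change under a single vertex move. -/
theorem weight_change_single_move {V : Type*} [Fintype V] [DecidableEq V]
    (G : SimpleGraph V) [DecidableRel G.Adj] (a b h : V → ℕ)
    (hh : ∀ u, h u ≤ 1)
    (hdeg : ∀ u : V, G.degree u = a u + b u + h u)
    (X1 X2 : Finset V) (hdisj : Disjoint X1 X2) (hun : X1 ∪ X2 = Finset.univ) :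
    (∀ u ∈ X1, (X1.filter (G.Adj u)).card ≤ a u →
      wt G a b X1 X2 + h u ≤ wt G a b (X1.erase u) (insert u X2)) ∧
    (∀ v ∈ X2, (X2.filter (G.Adj v)).card + 1 ≤ b v + h v →
      wt G a b X1 X2 + (2 - h v) ≤ wt G a b (insert v X1) (X2.erase v)) := by
  constructor
  · intro u hu hle
    have hu2 : u ∉ X2 := Finset.disjoint_left.1 hdisj hu
    have e1 := edgesIn_erase G X1 u hu
    have e2 := edgesIn_insert G X2 u hu2
    have ds := degree_split G X1 X2 hdisj hun u
    have s1 := Finset.sum_erase_add X1 b hu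
    have s2 := Finset.sum_insert (f := a) hu2
    have hd := hdeg u
    unfold wt
    rw [e2, s2]
    omega
  · intro v hv hle
    have hv1 : v ∉ X1 := Finset.disjoint_right.1 hdisj hv
    have e1 := edgesIn_insert G X1 v hv1
    have e2 := edgesIn_erase G X2 v hv
    have ds := degree_split G X1 X2 hdisj hun v
    have s1 := Finset.sum_insert (f := b) hv1
    have s2 := Finset.sum_erase_add X2 a hv
    have hd := hdeg v
    have hhv := hh v
    unfold wt
    rw [e1, s1]
    omega
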